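/- Let q, a, x be complex numbers with 0 < |q| < 1 and a·x·q^k ≠ 1 for all integers k with 0 ≤ k ≤ n−1, and let n ≥ 1 be an integer. Then ∑_{k=1}^{n} k·[n choose k]_q·q^{k(k−1)/2}·(−a·x)^{k−1} = (a·x;q)_n · ∑_{k=0}^{n−1} q^k/(1 − a·x·q^k). -/

import Mathlib

open Polynomial Finset


/-- The finite q-Pochhammer symbol `(a;q)_n = ∏_{k=0}^{n-1} (1 - a q^k)`. -/
noncomputable def qPoch (a q : ℂ) (n : ℕ) : ℂ := ∏ k ∈ Finset.range n, (1 - a * q ^ k)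

/-- The Gaussian (q-binomial) coefficient `[n choose k]_q`. -/
noncomputable def qBinom (q : ℂ) (n k : ℕ) : ℂ := qPoch q q n / (qPoch q q k * qPoch q q (n - k))

lemma qPoch_succ (a q : ℂ) (m : ℕ) : qPoch a q (m+1) = qPoch a q m * (1 - a * q ^ m) :=
  Finset.prod_range_succ _ _

lemma factor_ne {q : ℂ} (hq1 : ‖q‖ < 1) (k : ℕ) : (1 : ℂ) - q * q ^ k ≠ 0 := by
  intro h
  have h1 : q * q ^ k = 1 := by linear_combination -h
  have h2 : ‖q * q ^ k‖ = 1 := by rw [h1]; simp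
  have h3 : ‖q‖ ^ k ≤ 1 := pow_le_one₀ (norm_nonneg q) hq1.le
  rw [norm_mul, norm_pow] at h2
  nlinarith [norm_nonneg q]

lemma qPoch_qq_ne {q : ℂ} (hq1 : ‖q‖ < 1) (m : ℕ) : qPoch q q m ≠ 0 :=
  Finset.prod_ne_zero_iff.mpr fun k _ => factor_ne hq1 k

lemma qBinom_zero {q : ℂ} (hq1 : ‖q‖ < 1) (n : ℕ) : qBinom q n 0 = 1 := by
  unfold qBinom
  simp only [Nat.sub_zero, qPoch, Finset.range_zero, Finset.prod_empty, one_mul]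
  exact div_self (Finset.prod_ne_zero_iff.mpr fun k _ => factor_ne hq1 k)

lemma qBinom_self {q : ℂ} (hq1 : ‖q‖ < 1) (n : ℕ) : qBinom q n n = 1 := by
  unfold qBinom
  simp only [Nat.sub_self, qPoch, Finset.range_zero, Finset.prod_empty, mul_one]
  exact div_self (Finset.prod_ne_zero_iff.mpr fun k _ => factor_ne hq1 k)

lemma qBinom_pascal {q : ℂ} (hq1 : ‖q‖ < 1) {n k : ℕ} (hk : k < n) :
    qBinom q (n+1) (k+1) = qBinom q n (k+1) + q ^ (n-k) * qBinom q n k := by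
  obtain ⟨d, rfl⟩ : ∃ d, n = k + 1 + d := ⟨n - (k+1), by omega⟩
  unfold qBinom
  rw [show (k+1+d+1) - (k+1) = d+1 from by omega, show (k+1+d) - (k+1) = d from by omega,
    show (k+1+d) - k = d+1 from by omega, show k+1+d+1 = (k+d+1)+1 from by omega,
    show k+1+d = (k+d)+1 from by omega,
    qPoch_succ, qPoch_succ, qPoch_succ q q k, qPoch_succ q q d,
    show k+d = (k+1+d) - 1 from by omega]
  have hA : qPoch q q ((k+1+d) - 1 + 1) ≠ 0 := qPoch_qq_ne hq1 _
  have hk0 : qPoch q q k ≠ 0 := qPoch_qq_ne hq1 k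
  have hd0 : qPoch q q d ≠ 0 := qPoch_qq_ne hq1 d
  have hfk := factor_ne hq1 k
  have hfd := factor_ne hq1 d
  field_simp
  rw [show k+1+d-1 = k+d from by omega]
  ring

noncomputable def cC (q : ℂ) (n k : ℕ) : ℂ := qBinom q n k * q ^ (k*(k-1)/2)

lemma tri_succ (k : ℕ) : (k+1)*k/2 = k*(k-1)/2 + k := by
  have h1 : (k+1)*k/2 = (k+1).choose 2 := by
    rw [Nat.choose_two_right]; simp
  have h2 : k*(k-1)/2 = k.choose 2 := (Nat.choose_two_right k).symm
  rw [h1, h2, Nat.choose_succ_succ]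
  simp [Nat.choose_one_right, Nat.add_comm]

lemma cC_zero {q : ℂ} (hq1 : ‖q‖ < 1) (n : ℕ) : cC q n 0 = 1 := by
  simp [cC, qBinom_zero hq1]

lemma cC_top {q : ℂ} (hq1 : ‖q‖ < 1) (n : ℕ) : cC q (n+1) (n+1) = q ^ n * cC q n n := by
  unfold cC
  rw [qBinom_self hq1, qBinom_self hq1]
  simp only [Nat.add_sub_cancel]
  rw [tri_succ, pow_add]
  ring

lemma cC_pascal {q : ℂ} (hq1 : ‖q‖ < 1) {n k : ℕ} (hk : k < n) :
    cC q (n+1) (k+1) = cC q n (k+1) + q ^ n * cC q n k := by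
  unfold cC
  rw [qBinom_pascal hq1 hk, add_mul]
  simp only [Nat.add_sub_cancel]
  rw [tri_succ, pow_add]
  have hq : q ^ (n-k) * q ^ k = q ^ n := by rw [← pow_add]; congr 1; omega
  linear_combination (qBinom q n k * q ^ (k*(k-1)/2)) * hq

lemma gauss {q : ℂ} (hq1 : ‖q‖ < 1) (n : ℕ) :
    ∑ k ∈ range (n+1), C (cC q n k) * (-X : ℂ[X]) ^ k
      = ∏ k ∈ range n, (1 - C (q ^ k) * X) := by
  induction n with
  | zero => simp [cC_zero hq1]
  | succ n ih =>
    rw [prod_range_succ, ← ih]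
    have expand : (∑ k ∈ range (n+1), C (cC q n k) * (-X : ℂ[X]) ^ k) * (1 - C (q ^ n) * X)
        = (∑ k ∈ range (n+1), C (cC q n k) * (-X : ℂ[X]) ^ k)
          + ∑ k ∈ range (n+1), C (q ^ n * cC q n k) * (-X : ℂ[X]) ^ (k+1) := by
      rw [mul_sub, mul_one, Finset.sum_mul, sub_eq_add_neg, ← Finset.sum_neg_distrib]
      congr 1
      refine Finset.sum_congr rfl fun k _ => ?_
      rw [map_mul]
      ring
    rw [expand, Finset.sum_range_succ (fun k => C (cC q (n+1) k) * (-X : ℂ[X]) ^ k),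
      Finset.sum_range_succ' (fun k => C (cC q (n+1) k) * (-X : ℂ[X]) ^ k),
      Finset.sum_range_succ' (fun k => C (cC q n k) * (-X : ℂ[X]) ^ k),
      Finset.sum_range_succ (fun k => C (q ^ n * cC q n k) * (-X : ℂ[X]) ^ (k+1))]
    have hsum : ∑ k ∈ range n, C (cC q (n+1) (k+1)) * (-X : ℂ[X]) ^ (k+1)
        = ∑ k ∈ range n, (C (cC q n (k+1)) * (-X : ℂ[X]) ^ (k+1)
            + C (q ^ n * cC q n k) * (-X : ℂ[X]) ^ (k+1)) := by
      refine Finset.sum_congr rfl fun k hk => ?_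
      rw [cC_pascal hq1 (Finset.mem_range.mp hk), map_add, add_mul]
    rw [hsum, Finset.sum_add_distrib, cC_zero hq1, cC_zero hq1, cC_top hq1]
    ring

lemma derivative_finset_prod {ι : Type*} [DecidableEq ι] (s : Finset ι) (f : ι → ℂ[X]) :
    Polynomial.derivative (∏ i ∈ s, f i)
      = ∑ i ∈ s, (∏ j ∈ s.erase i, f j) * Polynomial.derivative (f i) := by
  induction s using Finset.induction_on with
  | empty => simp
  | @insert a s ha ih =>
    rw [Finset.prod_insert ha, Polynomial.derivative_mul, Finset.sum_insert ha,
      Finset.erase_insert ha, ih, Finset.mul_sum]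
    congr 1
    · exact mul_comm _ _
    refine Finset.sum_congr rfl fun i hi => ?_
    have hia : i ≠ a := fun h => ha (h ▸ hi)
    rw [Finset.erase_insert_of_ne hia.symm, Finset.prod_insert (fun h => ha (Finset.mem_of_mem_erase h))]
    ring

theorem stmt1 (q a x : ℂ) (hq0 : 0 < ‖q‖) (hq1 : ‖q‖ < 1)
    (n : ℕ) (hn : 1 ≤ n) (hax : ∀ k : ℕ, k < n → a * x * q ^ k ≠ 1) :
    ∑ k ∈ Finset.Icc 1 n, (k : ℂ) * qBinom q n k * q ^ (k * (k - 1) / 2) * (-(a * x)) ^ (k - 1) =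
      qPoch (a * x) q n * ∑ k ∈ Finset.range n, q ^ k / (1 - a * x * q ^ k) := by
  classical
  set t := a * x with ht
  have hd := congrArg (fun p : ℂ[X] => -Polynomial.eval t (Polynomial.derivative p)) (gauss hq1 n)
  -- compute the LHS of hd
  have hL : -Polynomial.eval t (Polynomial.derivative
      (∑ k ∈ range (n+1), C (cC q n k) * (-X : ℂ[X]) ^ k))
      = ∑ k ∈ range (n+1), (k : ℂ) * cC q n k * (-t) ^ (k-1) := by
    rw [Polynomial.derivative_sum, Polynomial.eval_finset_sum, ← Finset.sum_neg_distrib]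
    refine Finset.sum_congr rfl fun k _ => ?_
    rw [Polynomial.derivative_C_mul, Polynomial.derivative_pow]
    simp [Polynomial.eval_mul, Polynomial.eval_pow]
    cases k with
    | zero => simp
    | succ m => simp [pow_succ]; ring
  -- compute the RHS of hd
  have hR : -Polynomial.eval t (Polynomial.derivative
      (∏ k ∈ range n, (1 - C (q ^ k) * X)))
      = qPoch t q n * ∑ k ∈ Finset.range n, q ^ k / (1 - t * q ^ k) := by
    rw [derivative_finset_prod, Polynomial.eval_finset_sum, Finset.mul_sum,
      ← Finset.sum_neg_distrib]
    refine Finset.sum_congr rfl fun k hk => ?_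
    have hk' := Finset.mem_range.mp hk
    have hne : (1 : ℂ) - t * q ^ k ≠ 0 := sub_ne_zero.mpr (fun h => hax k hk' h.symm)
    have hpoch : qPoch t q n = (1 - t * q ^ k) * ∏ j ∈ (range n).erase k, (1 - t * q ^ j) := by
      unfold qPoch
      exact (Finset.mul_prod_erase _ _ hk).symm
    rw [hpoch]
    have heval : Polynomial.eval t (∏ j ∈ (range n).erase k, (1 - C (q ^ j) * X : ℂ[X]))
        = ∏ j ∈ (range n).erase k, (1 - t * q ^ j) := by
      rw [Polynomial.eval_prod]
      refine Finset.prod_congr rfl fun j _ => ?_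
      simp [mul_comm]
    simp only [Polynomial.eval_mul, heval, Polynomial.derivative_sub,
      Polynomial.derivative_one, Polynomial.derivative_C_mul, Polynomial.derivative_X,
      mul_one, zero_sub, Polynomial.eval_neg, Polynomial.eval_C]
    field_simp
  rw [hL, hR] at hd
  rw [← hd]
  -- convert Icc 1 n sum to range (n+1) sum
  have hsub : Finset.Icc 1 n ⊆ Finset.range (n+1) := by
    intro k hk
    simp only [Finset.mem_Icc] at hk
    exact Finset.mem_range.mpr (by omega)
  rw [Finset.sum_subset hsub]
  · refine Finset.sum_congr rfl fun k _ => ?_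
    unfold cC
    ring
  · intro k hk hnk
    have : k = 0 := by
      simp only [Finset.mem_range] at hk
      simp only [Finset.mem_Icc] at hnk
      omega
    simp [this]
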